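/- For a connected graph G of order n, mvd(G) = n if and only if every block of G is a complete graph. -/

import Mathlib

open SimpleGraph

variable {V : Type*}

/-- `S` is a set of vertices (not containing `x` or `y`) whose removal separates `x` from `y`:
every walk from `x` to `y` meets `S`. -/
def IsSepSet (G : SimpleGraph V) (S : Set V) (x y : V) : Prop :=
  x ∉ S ∧ y ∉ S ∧ ∀ p : G.Walk x y, ∃ v ∈ p.support, v ∈ S

/-- `τ` is an MVD-coloring of `G`: every pair of distinct nonadjacent vertices is
separated by a monochromatic vertex cut. -/
def IsMVDColoring (G : SimpleGraph V) (τ : V → ℕ) : Prop :=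
  ∀ x y : V, x ≠ y → ¬ G.Adj x y →
    ∃ S : Set V, IsSepSet G S x y ∧ ∀ u ∈ S, ∀ w ∈ S, τ u = τ w

/-- The monochromatic vertex-disconnection number: the maximum number of colors
used by an MVD-coloring of `G`. -/
noncomputable def mvd (G : SimpleGraph V) : ℕ :=
  sSup {k | ∃ τ : V → ℕ, IsMVDColoring G τ ∧ (Set.range τ).ncard = k}

/-- `G` has no cut vertex: removing any single vertex leaves a preconnected graph. -/
def NoCutVertex (G : SimpleGraph V) : Prop :=
  ∀ v : V, (G.induce {u | u ≠ v}).Preconnected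

/-- `B` is a block of `G`: a maximal vertex set inducing a connected subgraph
without a cut vertex. -/
def IsBlock (G : SimpleGraph V) (B : Set V) : Prop :=
  (G.induce B).Connected ∧ NoCutVertex (G.induce B) ∧
    ∀ C : Set V, B ⊆ C → (G.induce C).Connected → NoCutVertex (G.induce C) → C = B


section Aux

variable (G : SimpleGraph V)

/-- There is a walk from `a` to `b` all of whose vertices lie in `A`. -/
def WalkIn (A : Set V) (a b : V) : Prop :=
  ∃ p : G.Walk a b, ∀ u ∈ p.support, u ∈ A

variable {G}

lemma WalkIn.refl {A : Set V} {a : V} (ha : a ∈ A) : WalkIn G A a a :=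
  ⟨Walk.nil, by simp [ha]⟩

lemma WalkIn.symm {A : Set V} {a b : V} (h : WalkIn G A a b) : WalkIn G A b a := by
  obtain ⟨p, hp⟩ := h
  exact ⟨p.reverse, by simpa using hp⟩

lemma WalkIn.trans {A : Set V} {a b c : V} (h1 : WalkIn G A a b) (h2 : WalkIn G A b c) :
    WalkIn G A a c := by
  obtain ⟨p, hp⟩ := h1; obtain ⟨q, hq⟩ := h2
  refine ⟨p.append q, fun u hu => ?_⟩
  rcases (Walk.mem_support_append_iff _ _).mp hu with h | h
  exacts [hp u h, hq u h]

lemma WalkIn.mono {A B : Set V} (hAB : A ⊆ B) {a b : V} (h : WalkIn G A a b) :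
    WalkIn G B a b := by
  obtain ⟨p, hp⟩ := h
  exact ⟨p, fun u hu => hAB (hp u hu)⟩

lemma walkIn_prefix [DecidableEq V] {A : Set V} {a b : V} {p : G.Walk a b} (hp : ∀ u ∈ p.support, u ∈ A)
    {w : V} (hw : w ∈ p.support) : WalkIn G A a w :=
  ⟨p.takeUntil w hw, fun u hu => hp u (p.support_takeUntil_subset hw hu)⟩

lemma takeUntil_avoid [DecidableEq V] {a c : V} (r : G.Walk a c) (hc : r.support.count c ≤ 1)
    {u : V} (hu : u ∈ r.support) (hne : u ≠ c) : c ∉ (r.takeUntil u hu).support := by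
  intro hmem
  have hsup : r.support = (r.takeUntil u hu).support ++ (r.dropUntil u hu).support.tail := by
    conv_lhs => rw [← r.take_spec hu]
    rw [Walk.support_append]
  have h1 : 0 < (r.takeUntil u hu).support.count c := List.count_pos_iff.mpr hmem
  have h2 : c ∈ (r.dropUntil u hu).support.tail := by
    have hce : c ∈ (r.dropUntil u hu).support := Walk.end_mem_support _
    rw [(r.dropUntil u hu).support_eq_cons] at hce
    rcases List.mem_cons.mp hce with hce | hce
    · exact absurd hce.symm hne
    · exact hce
  have h2' : 0 < ((r.dropUntil u hu).support.tail).count c := List.count_pos_iff.mpr h2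
  have : 2 ≤ r.support.count c := by
    rw [hsup, List.count_append]; omega
  omega

lemma reach_until {A : Set V} {a b : V} (p : G.Walk a b) (hp : ∀ u ∈ p.support, u ∈ A)
    {c : V} (hc : c ∈ p.support) :
    ∃ q : G.Walk a c, (∀ u ∈ q.support, u ∈ p.support) ∧ (∀ u ∈ q.support, u ∈ A) ∧
      ∀ u ∈ q.support, u ≠ c → WalkIn G (A \ {c}) a u := by
  classical
  refine ⟨p.takeUntil c hc, fun u hu => p.support_takeUntil_subset hc hu,
    fun u hu => hp u (p.support_takeUntil_subset hc hu), ?_⟩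
  intro u hu hne
  set q := p.takeUntil c hc with hqdef
  have hc1 : q.support.count c ≤ 1 := le_of_eq (p.count_support_takeUntil_eq_one hc)
  have havoid := takeUntil_avoid q hc1 hu hne
  refine ⟨q.takeUntil u hu, fun w hw => ?_⟩
  have hw' : w ∈ q.support := q.support_takeUntil_subset hu hw
  refine ⟨hp w (p.support_takeUntil_subset hc hw'), ?_⟩
  simp only [Set.mem_singleton_iff]
  rintro rfl
  exact havoid hw

lemma walk_unlift {G : SimpleGraph V} {A : Set V} {a b : ↥A} (p : (G.induce A).Walk a b) :
    ∃ q : G.Walk a.val b.val, q.support = p.support.map Subtype.val := by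
  induction p with
  | nil => exact ⟨Walk.nil, by simp⟩
  | @cons u c w h p ih =>
    obtain ⟨q, hq⟩ := ih
    exact ⟨Walk.cons h q, by exact congrArg (List.cons u.val) hq⟩

lemma walk_lift {G : SimpleGraph V} {A : Set V} {a b : V} (p : G.Walk a b) :
    (∀ u ∈ p.support, u ∈ A) → ∀ (ha : a ∈ A) (hb : b ∈ A),
      ∃ q : (G.induce A).Walk ⟨a, ha⟩ ⟨b, hb⟩, q.support.map Subtype.val = p.support := by
  induction p with
  | nil => intro _ ha hb; exact ⟨Walk.nil, by simp⟩
  | @cons u c w h p ih =>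
    intro hs ha hb
    have hcA : c ∈ A := hs c (by simp)
    obtain ⟨q, hq⟩ := ih (fun x hx => hs x (by simp [hx])) hcA hb
    exact ⟨Walk.cons (by exact h) q, by exact congrArg (List.cons u) hq⟩

end Aux
lemma key [Fintype V] {G : SimpleGraph V}
    (H : ∀ S : Set V, (∀ a ∈ S, ∀ b ∈ S, WalkIn G S a b) →
      (∀ v ∈ S, ∀ a ∈ S \ {v}, ∀ b ∈ S \ {v}, WalkIn G (S \ {v}) a b) → G.IsClique S) :
    ∀ (n : ℕ) (A : Set V) (x y : V), A.ncard ≤ n → x ∈ A → y ∈ A → x ≠ y → ¬ G.Adj x y →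
      (∀ a ∈ A, ∀ b ∈ A, WalkIn G A a b) →
      ∃ v ∈ A, v ≠ x ∧ v ≠ y ∧
        ∀ p : G.Walk x y, (∀ u ∈ p.support, u ∈ A) → v ∈ p.support := by
  classical
  intro n
  induction n with
  | zero =>
    intro A x y hn hx _ _ _ _
    have : A = ∅ := (Set.ncard_eq_zero (Set.toFinite A)).mp (Nat.le_zero.mp hn)
    exact absurd (this ▸ hx) (Set.notMem_empty x)
  | succ n ih =>
    intro A x y hn hx hy hxy hadj hconnA
    by_cases hnc : ∀ v ∈ A, ∀ a ∈ A \ {v}, ∀ b ∈ A \ {v}, WalkIn G (A \ {v}) a b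
    · exact absurd ((H A hconnA hnc) hx hy hxy) hadj
    push_neg at hnc
    obtain ⟨v, hvA, a, ha, b, hb, hab⟩ := hnc
    by_cases hdir : v ≠ x ∧ v ≠ y ∧ ¬ WalkIn G (A \ {v}) x y
    · refine ⟨v, hvA, hdir.1, hdir.2.1, fun p hp => ?_⟩
      by_contra hvp
      exact hdir.2.2 ⟨p, fun u hu => ⟨hp u hu, fun he => hvp (he ▸ hu)⟩⟩
    push_neg at hdir
    -- hdir : v ≠ x → v ≠ y → WalkIn G (A \ {v}) x y
    set z := if v = x then y else x with hzdef
    have hzA : z ∈ A := by rw [hzdef]; split <;> assumption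
    have hzv : z ≠ v := by
      rw [hzdef]; split
      · rename_i h; rw [h]; exact fun he => hxy he.symm
      · rename_i h; exact fun he => h he.symm
    set comp := {u : V | WalkIn G (A \ {v}) z u} with hcompdef
    have hzc : z ∈ comp := WalkIn.refl ⟨hzA, hzv⟩
    set A' := insert v comp with hA'def
    have hcompA : comp ⊆ A \ {v} := by
      rintro u ⟨p, hp⟩
      exact hp u p.end_mem_support
    have hA'A : A' ⊆ A := Set.insert_subset hvA (hcompA.trans Set.diff_subset)
    have hclosed : ∀ u ∈ comp, WalkIn G comp z u := by
      rintro u ⟨p, hp⟩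
      exact ⟨p, fun w hw => walkIn_prefix hp hw⟩
    have hxA' : x ∈ A' := by
      by_cases hvx : v = x
      · rw [← hvx]; exact Set.mem_insert _ _
      · have : z = x := by rw [hzdef, if_neg hvx]
        exact Set.mem_insert_of_mem _ (this ▸ hzc)
    have hyA' : y ∈ A' := by
      by_cases hvx : v = x
      · have : z = y := by rw [hzdef, if_pos hvx]
        exact Set.mem_insert_of_mem _ (this ▸ hzc)
      · by_cases hvy : v = y
        · rw [← hvy]; exact Set.mem_insert _ _
        · have hzx : z = x := by rw [hzdef, if_neg hvx]
          refine Set.mem_insert_of_mem _ ?_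
          show WalkIn G (A \ {v}) z y
          rw [hzx]; exact hdir hvx hvy
    -- A' is strictly smaller than A
    have hwit : ∃ w ∈ A, w ∉ A' := by
      by_cases hac : a ∈ comp
      · refine ⟨b, hb.1, fun hbA' => ?_⟩
        rcases hbA' with rfl | hbc
        · exact hb.2 rfl
        · exact hab (hac.symm.trans hbc)
      · refine ⟨a, ha.1, fun haA' => ?_⟩
        rcases haA' with rfl | hac'
        · exact ha.2 rfl
        · exact hac hac'
    have hcard : A'.ncard ≤ n := by
      obtain ⟨w, hwA, hwA'⟩ := hwit
      have : A' ⊂ A := (Set.ssubset_iff_of_subset hA'A).mpr ⟨w, hwA, hwA'⟩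
      have := Set.ncard_lt_ncard this (Set.toFinite A)
      omega
    -- connectivity of A'
    have hzA' : z ∈ A' := Set.mem_insert_of_mem _ hzc
    have hconnz : ∀ u ∈ A', WalkIn G A' z u := by
      intro u hu
      rcases hu with rfl | huc
      · obtain ⟨p, hp⟩ := hconnA z hzA u hvA
        obtain ⟨q, hq1, hq2, hq3⟩ := reach_until p hp p.end_mem_support
        refine ⟨q, fun w hw => ?_⟩
        by_cases hwv : w = u
        · exact hwv ▸ Set.mem_insert _ _
        · exact Set.mem_insert_of_mem _ (hq3 w hw hwv)
      · exact (hclosed u huc).mono (Set.subset_insert _ _)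
    have hconnA' : ∀ c ∈ A', ∀ d ∈ A', WalkIn G A' c d :=
      fun c hc d hd => ((hconnz c hc).symm).trans (hconnz d hd)
    obtain ⟨v', hv'A', hv'x, hv'y, hsep⟩ := ih A' x y hcard hxA' hyA' hxy hadj hconnA'
    refine ⟨v', hA'A hv'A', hv'x, hv'y, ?_⟩
    intro p hp
    by_contra hv'p
    apply hv'p
    by_cases hvp : v ∈ p.support
    · by_cases hvx : v = x
      · -- v = x : take suffix of p after last x, i.e. reach_until on p.reverse
        have hzy : z = y := by rw [hzdef, if_pos hvx]
        obtain ⟨q, hq1, hq2, hq3⟩ := reach_until p.reverse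
          (by simpa using hp) p.reverse.end_mem_support
        -- q : Walk y x
        have hmem : ∀ u ∈ q.reverse.support, u ∈ A' := by
          intro u hu
          rw [Walk.support_reverse, List.mem_reverse] at hu
          by_cases huv : u = x
          · rw [huv, ← hvx]; exact Set.mem_insert _ _
          · refine Set.mem_insert_of_mem _ ?_
            show WalkIn G (A \ {v}) z u
            rw [hzy, hvx]; exact hq3 u hu huv
        have := hsep q.reverse hmem
        rw [Walk.support_reverse, List.mem_reverse] at this
        have := hq1 v' this
        rw [Walk.support_reverse, List.mem_reverse] at this
        exact this
      · by_cases hvy : v = y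
        · have hzx : z = x := by rw [hzdef, if_neg hvx]
          obtain ⟨q, hq1, hq2, hq3⟩ := reach_until p hp p.end_mem_support
          have hmem : ∀ u ∈ q.support, u ∈ A' := by
            intro u hu
            by_cases huv : u = y
            · rw [huv, ← hvy]; exact Set.mem_insert _ _
            · refine Set.mem_insert_of_mem _ ?_
              show WalkIn G (A \ {v}) z u
              rw [hzx, hvy]; exact hq3 u hu huv
          exact hq1 v' (hsep q hmem)
        · -- v interior
          have hzx : z = x := by rw [hzdef, if_neg hvx]
          have hWxy : WalkIn G (A \ {v}) x y := hdir hvx hvy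
          obtain ⟨t, ht1, ht2, ht3⟩ := reach_until p hp hvp
          obtain ⟨s, hs1, hs2, hs3⟩ := reach_until p.reverse (by simpa using hp)
            (by simpa using hvp)
          -- t : Walk x v, s : Walk y v
          have hmem : ∀ u ∈ (t.append s.reverse).support, u ∈ A' := by
            intro u hu
            rcases (Walk.mem_support_append_iff _ _).mp hu with hu | hu
            · by_cases huv : u = v
              · exact huv ▸ Set.mem_insert _ _
              · refine Set.mem_insert_of_mem _ ?_
                show WalkIn G (A \ {v}) z u
                rw [hzx]; exact ht3 u hu huv
            · rw [Walk.support_reverse, List.mem_reverse] at hu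
              by_cases huv : u = v
              · exact huv ▸ Set.mem_insert _ _
              · refine Set.mem_insert_of_mem _ ?_
                show WalkIn G (A \ {v}) z u
                rw [hzx]; exact hWxy.trans (hs3 u hu huv)
          have := hsep (t.append s.reverse) hmem
          rcases (Walk.mem_support_append_iff _ _).mp this with h | h
          · exact ht1 v' h
          · rw [Walk.support_reverse, List.mem_reverse] at h
            have := hs1 v' h
            rw [Walk.support_reverse, List.mem_reverse] at this
            exact this
    · -- v not on p : whole of p lies in comp
      have hvx : v ≠ x := fun h => hvp (h ▸ p.start_mem_support)
      have hzx : z = x := by rw [hzdef, if_neg (fun h => hvx h)]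
      have hp' : ∀ u ∈ p.support, u ∈ A \ {v} := fun u hu =>
        ⟨hp u hu, fun he => hvp (he ▸ hu)⟩
      have hmem : ∀ u ∈ p.support, u ∈ A' := by
        intro u hu
        refine Set.mem_insert_of_mem _ ?_
        show WalkIn G (A \ {v}) z u
        rw [hzx]; exact walkIn_prefix hp' hu
      exact hsep p hmem
lemma induce_connected_of_walkIn {G : SimpleGraph V} {S : Set V} (hSne : S.Nonempty)
    (hconn : ∀ a ∈ S, ∀ b ∈ S, WalkIn G S a b) : (G.induce S).Connected := by
  rw [connected_iff]
  refine ⟨?_, hSne.to_subtype⟩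
  rintro ⟨a, haS⟩ ⟨b, hbS⟩
  obtain ⟨p, hp⟩ := hconn a haS b hbS
  obtain ⟨q, -⟩ := walk_lift p hp haS hbS
  exact ⟨q⟩

lemma noCutVertex_of_walkIn {G : SimpleGraph V} {S : Set V}
    (hnocut : ∀ v ∈ S, ∀ a ∈ S \ {v}, ∀ b ∈ S \ {v}, WalkIn G (S \ {v}) a b) :
    NoCutVertex (G.induce S) := by
  rintro ⟨v, hvS⟩ ⟨⟨a, haS⟩, hav⟩ ⟨⟨b, hbS⟩, hbv⟩
  have ha' : a ∈ S \ {v} := ⟨haS, fun h => hav (Subtype.ext h)⟩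
  have hb' : b ∈ S \ {v} := ⟨hbS, fun h => hbv (Subtype.ext h)⟩
  obtain ⟨p, hp⟩ := hnocut v hvS a ha' b hb'
  obtain ⟨q, hq⟩ := walk_lift p (fun u hu => (hp u hu).1) haS hbS
  have hq' : ∀ w ∈ q.support, w ∈ {u : ↥S | u ≠ (⟨v, hvS⟩ : ↥S)} := by
    intro w hw
    have hwp : w.val ∈ p.support := by
      rw [← hq]; exact List.mem_map_of_mem hw
    exact fun hwe => (hp _ hwp).2 (by rw [hwe]; exact rfl)
  obtain ⟨r, -⟩ := walk_lift q hq' (hq' _ q.start_mem_support) (hq' _ q.end_mem_support)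
  exact ⟨r⟩

lemma clique_of_conn_nocut [Fintype V] {G : SimpleGraph V}
    (hb : ∀ B : Set V, IsBlock G B → G.IsClique B) (S : Set V)
    (hconn : ∀ a ∈ S, ∀ b ∈ S, WalkIn G S a b)
    (hnocut : ∀ v ∈ S, ∀ a ∈ S \ {v}, ∀ b ∈ S \ {v}, WalkIn G (S \ {v}) a b) :
    G.IsClique S := by
  rcases S.eq_empty_or_nonempty with rfl | hSne
  · simp
  classical
  set F : Set (Set V) := {C | S ⊆ C ∧ (G.induce C).Connected ∧ NoCutVertex (G.induce C)}
    with hF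
  have hSF : S ∈ F :=
    ⟨subset_rfl, induce_connected_of_walkIn hSne hconn, noCutVertex_of_walkIn hnocut⟩
  obtain ⟨C, hCF, hCmax⟩ :=
    Set.Finite.exists_maximalFor Set.ncard F (Set.toFinite F) ⟨S, hSF⟩
  have hblock : IsBlock G C := by
    refine ⟨hCF.2.1, hCF.2.2, fun D hCD hDc hDn => ?_⟩
    have hDF : D ∈ F := ⟨hCF.1.trans hCD, hDc, hDn⟩
    have hle : C.ncard ≤ D.ncard := Set.ncard_le_ncard hCD (Set.toFinite D)
    have heq := hCmax hDF hle
    exact (Set.eq_of_subset_of_ncard_le hCD heq.ge (Set.toFinite D)).symm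
  exact (hb C hblock).subset hCF.1

lemma block_avoid {G : SimpleGraph V} {B : Set V} (hB : (G.induce B).Connected)
    (hnc : NoCutVertex (G.induce B)) {x y : V} (hx : x ∈ B) (hy : y ∈ B) (v : V)
    (hvx : v ≠ x) (hvy : v ≠ y) :
    ∃ p : G.Walk x y, ∀ u ∈ p.support, u ∈ B ∧ u ≠ v := by
  by_cases hvB : v ∈ B
  · have hxm : (⟨x, hx⟩ : ↥B) ∈ {u : ↥B | u ≠ (⟨v, hvB⟩ : ↥B)} :=
      fun h => hvx (congrArg Subtype.val h).symm
    have hym : (⟨y, hy⟩ : ↥B) ∈ {u : ↥B | u ≠ (⟨v, hvB⟩ : ↥B)} :=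
      fun h => hvy (congrArg Subtype.val h).symm
    obtain ⟨w⟩ := hnc ⟨v, hvB⟩ ⟨⟨x, hx⟩, hxm⟩ ⟨⟨y, hy⟩, hym⟩
    obtain ⟨q, hq⟩ := walk_unlift w
    obtain ⟨r, hr⟩ := walk_unlift q
    refine ⟨r, fun u hu => ?_⟩
    rw [hr] at hu
    obtain ⟨t, ht, rfl⟩ := List.mem_map.mp hu
    refine ⟨t.prop, fun he => ?_⟩
    rw [hq] at ht
    obtain ⟨s, hs, hst⟩ := List.mem_map.mp ht
    exact s.prop (by rw [hst]; exact Subtype.ext he)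
  · obtain ⟨w⟩ := hB.preconnected ⟨x, hx⟩ ⟨y, hy⟩
    obtain ⟨r, hr⟩ := walk_unlift w
    refine ⟨r, fun u hu => ?_⟩
    rw [hr] at hu
    obtain ⟨t, ht, rfl⟩ := List.mem_map.mp hu
    exact ⟨t.prop, fun he => hvB (he ▸ t.prop)⟩
theorem mvd_eq_card_iff_blocks_complete [Fintype V] (G : SimpleGraph V)
    (hconn : G.Connected) :
    mvd G = Fintype.card V ↔ ∀ B : Set V, IsBlock G B → G.IsClique B := by
  classical
  have hV : Nonempty V := hconn.nonempty
  set M : Set ℕ := {k | ∃ τ : V → ℕ, IsMVDColoring G τ ∧ (Set.range τ).ncard = k} with hM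
  have hrange : ∀ τ : V → ℕ, (Set.range τ).ncard = (Finset.univ.image τ).card := by
    intro τ
    rw [← Set.ncard_coe_finset]
    congr 1
    rw [Finset.coe_image, Finset.coe_univ, Set.image_univ]
  have hbdd : ∀ k ∈ M, k ≤ Fintype.card V := by
    rintro k ⟨τ, -, rfl⟩
    rw [hrange]
    exact Finset.card_image_le.trans (le_of_eq Finset.card_univ)
  have hBdd : BddAbove M := ⟨_, hbdd⟩
  have hmvd_def : mvd G = sSup M := rfl
  constructor
  · intro hmvd B hB
    have hMne : M.Nonempty := by
      refine ⟨1, fun _ => 0, ?_, ?_⟩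
      · intro x y hxy hadj
        refine ⟨{u | u ≠ x ∧ u ≠ y}, ⟨by simp, by simp, ?_⟩, fun _ _ _ _ => rfl⟩
        intro p
        cases p with
        | nil => exact absurd rfl hxy
        | @cons _ c _ h q =>
          refine ⟨c, List.mem_cons_of_mem _ q.start_mem_support, ?_, ?_⟩
          · exact fun h' => (G.ne_of_adj h) h'.symm
          · exact fun h' => hadj (h' ▸ h)
      · rw [Set.range_const, Set.ncard_singleton]
    have hmem : Fintype.card V ∈ M := by
      have := Nat.sSup_mem hMne hBdd
      rwa [← hmvd_def, hmvd] at this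
    obtain ⟨τ, hτ, hcard⟩ := hmem
    have hinj : Function.Injective τ := by
      rw [hrange] at hcard
      have hio := Finset.injOn_of_card_image_eq (s := Finset.univ) (f := τ)
        (by rw [hcard, Finset.card_univ])
      exact fun w₁ w₂ h => hio (Finset.mem_coe.mpr (Finset.mem_univ _))
        (Finset.mem_coe.mpr (Finset.mem_univ _)) h
    rw [isClique_iff]
    intro x hx y hy hxy
    by_contra hadj
    obtain ⟨S, ⟨hxS, hyS, hsep⟩, hmono⟩ := hτ x y hxy hadj
    obtain ⟨p⟩ := hconn.preconnected x y
    obtain ⟨v, hvp, hvS⟩ := hsep p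
    have hSv : ∀ w ∈ S, w = v := fun w hw => hinj (hmono w hw v hvS)
    have hvx : v ≠ x := fun h => hxS (h ▸ hvS)
    have hvy : v ≠ y := fun h => hyS (h ▸ hvS)
    obtain ⟨q, hq⟩ := block_avoid hB.1 hB.2.1 hx hy v hvx hvy
    obtain ⟨w, hwq, hwS⟩ := hsep q
    exact (hq w hwq).2 (hSv w hwS)
  · intro hb
    have hm : Fintype.card V ∈ M := by
      refine ⟨fun v => ((Fintype.equivFin V) v : ℕ), ?_, ?_⟩
      · intro x y hxy hadj
        have hH := clique_of_conn_nocut hb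
        have hcu : ∀ a ∈ (Set.univ : Set V), ∀ b ∈ (Set.univ : Set V), WalkIn G Set.univ a b := by
          intro a _ b _
          obtain ⟨p⟩ := hconn.preconnected a b
          exact ⟨p, fun _ _ => trivial⟩
        obtain ⟨v, _, hvx, hvy, hsep⟩ := key hH (Fintype.card V) Set.univ x y
          (by rw [Set.ncard_univ, Nat.card_eq_fintype_card]) trivial trivial hxy hadj hcu
        refine ⟨{v}, ⟨fun h => hvx (Set.mem_singleton_iff.mp h).symm,
          fun h => hvy (Set.mem_singleton_iff.mp h).symm, ?_⟩, ?_⟩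
        · intro p
          exact ⟨v, hsep p (fun _ _ => trivial), rfl⟩
        · intro u hu w hw
          rw [Set.mem_singleton_iff.mp hu, Set.mem_singleton_iff.mp hw]
      · have hinj : Function.Injective (fun v => ((Fintype.equivFin V) v : ℕ)) :=
          fun a b h => (Fintype.equivFin V).injective (Fin.val_injective h)
        rw [hrange, Finset.card_image_of_injective _ hinj, Finset.card_univ]
    rw [hmvd_def]
    exact le_antisymm (csSup_le ⟨_, hm⟩ hbdd) (le_csSup hBdd hm)
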